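/- q-difference (eigenvalue) equation for the one-variable Al-Salam–Carlitz polynomials: for every nonnegative integer n, every nonzero real q, every real a, and all real x ≠ 0, g(x) − (1+a)·(D g)(x) + a·(D(D g))(x) = q^{−n} · U_n^{(a)}(x;q), where g(x) := U_n^{(a)}(x/q; q) and (D h)(x) := (h(x) − h(q·x))/x. (Equivalently, (1 − (1+a)·D + a·D²)·τ^{−1} U_n^{(a)} = q^{−n}·U_n^{(a)} with (τ^{−1}h)(x) := h(x/q).) -/

import Mathlib

noncomputable section
namespace ASC

/-- The one-variable Al-Salam–Carlitz polynomials `U_n^{(a)}(x;q)`: `U_0 = 1`,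
`U_1 = x − 1 − a`, and
`x·U_n = U_{n+1} + (1+a)·q^n·U_n − a·q^{n−1}·(1−q^n)·U_{n−1}` for `n ≥ 1`. -/
def U1 (a q : ℝ) : ℕ → ℝ → ℝ
  | 0, _ => 1
  | 1, x => x - 1 - a
  | n + 2, x =>
      x * U1 a q (n + 1) x - (1 + a) * q ^ (n + 1) * U1 a q (n + 1) x
        + a * q ^ n * (1 - q ^ (n + 1)) * U1 a q n x

/-- The divided-difference operator `(D h)(x) := (h(x) − h(q·x))/x`. -/
def Dop (q : ℝ) (h : ℝ → ℝ) (x : ℝ) : ℝ := (h x - h (q * x)) / x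

lemma U1_rec (a q : ℝ) (n : ℕ) (x : ℝ) :
    U1 a q (n + 2) x = x * U1 a q (n + 1) x - (1 + a) * q ^ (n + 1) * U1 a q (n + 1) x
        + a * q ^ n * (1 - q ^ (n + 1)) * U1 a q n x := rfl

/-- Lowering identity: `U_{n+1}(x) − U_{n+1}(qx) = (1−q^{n+1})·x·U_n(x)`. -/
lemma lower (a q : ℝ) : ∀ (n : ℕ) (x : ℝ),
    U1 a q (n + 1) x - U1 a q (n + 1) (q * x) = (1 - q ^ (n + 1)) * x * U1 a q n x
  | 0, x => by simp only [U1]; ring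
  | 1, x => by simp only [U1, pow_one]; ring
  | (n + 2), x => by
      have h2 := lower a q (n + 1) x
      have h1 := lower a q n x
      have e1 : U1 a q (n + 3) x = x * U1 a q (n + 2) x
          - (1 + a) * q ^ (n + 2) * U1 a q (n + 2) x
          + a * q ^ (n + 1) * (1 - q ^ (n + 2)) * U1 a q (n + 1) x := rfl
      have e2 : U1 a q (n + 3) (q * x) = (q * x) * U1 a q (n + 2) (q * x)
          - (1 + a) * q ^ (n + 2) * U1 a q (n + 2) (q * x)
          + a * q ^ (n + 1) * (1 - q ^ (n + 2)) * U1 a q (n + 1) (q * x) := rfl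
      have e3 : U1 a q (n + 2) x = x * U1 a q (n + 1) x
          - (1 + a) * q ^ (n + 1) * U1 a q (n + 1) x
          + a * q ^ n * (1 - q ^ (n + 1)) * U1 a q n x := rfl
      have e4 : U1 a q (n + 2) (q * x) = (q * x) * U1 a q (n + 1) (q * x)
          - (1 + a) * q ^ (n + 1) * U1 a q (n + 1) (q * x)
          + a * q ^ n * (1 - q ^ (n + 1)) * U1 a q n (q * x) := rfl
      rw [e1, e2, e3, e4]
      rw [e3, e4] at h2
      linear_combination (q * x - (1 + a) * q ^ (n + 2)) * h2
        + a * q ^ (n + 1) * (1 - q ^ (n + 2)) * h1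

/-- Forward shift identity. -/
lemma fshift (a q : ℝ) (m : ℕ) (y : ℝ) :
    q ^ 2 * U1 a q (m + 2) (q * y)
      = q ^ (m + 4) * U1 a q (m + 2) y
        - (1 + a) * (1 - q ^ (m + 2)) * q ^ (m + 3) * U1 a q (m + 1) y
        + a * (1 - q ^ (m + 2)) * (1 - q ^ (m + 1)) * q ^ (m + 2) * U1 a q m y := by
  have hL := lower a q (m + 1) y
  have hrec := U1_rec a q m y
  have hrec' : U1 a q (m + 2) (q * y) = (q * y) * U1 a q (m + 1) (q * y)
      - (1 + a) * q ^ (m + 1) * U1 a q (m + 1) (q * y)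
      + a * q ^ m * (1 - q ^ (m + 1)) * U1 a q m (q * y) := rfl
  linear_combination (-q ^ 2) * hL + (q ^ 2 * (1 - q ^ (m + 2))) * hrec

/-- STATEMENT 17: the `q`-difference (eigenvalue) equation for the one-variable
Al-Salam–Carlitz polynomials: with `g(x) := U_n^{(a)}(x/q;q)`,
`g(x) − (1+a)·(Dg)(x) + a·(D(Dg))(x) = q^{−n}·U_n^{(a)}(x;q)` for `x ≠ 0`. -/
theorem statement17 (n : ℕ) (q a : ℝ) (hq : q ≠ 0) (x : ℝ) (hx : x ≠ 0) :
    (fun y => U1 a q n (y / q)) x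
        - (1 + a) * Dop q (fun y => U1 a q n (y / q)) x
        + a * Dop q (Dop q (fun y => U1 a q n (y / q))) x
      = q ^ (-(n : ℤ)) * U1 a q n x := by
  have hqq : q * x / q = x := mul_div_cancel_left₀ x hq
  have hzpow : (q : ℝ) ^ (-(n : ℤ)) = (q ^ n)⁻¹ := by
    rw [zpow_neg, zpow_natCast]
  match n with
  | 0 =>
      simp only [U1, Dop]
      simp [hzpow]
  | 1 =>
      simp only [U1, Dop, hqq]
      rw [hzpow]
      field_simp
      ring
  | (m + 2) =>
      have hLq : q * (x / q) = x := by field_simp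
      -- first divided difference at x
      have d1 : Dop q (fun y => U1 a q (m + 2) (y / q)) x
          = (1 - q ^ (m + 2)) / q * U1 a q (m + 1) (x / q) := by
        have h := lower a q (m + 1) (x / q)
        rw [hLq] at h
        simp only [Dop, hqq]
        rw [h]
        field_simp
      -- first divided difference at q*x
      have d1' : Dop q (fun y => U1 a q (m + 2) (y / q)) (q * x)
          = (1 - q ^ (m + 2)) / q * U1 a q (m + 1) x := by
        have h := lower a q (m + 1) x
        simp only [Dop, hqq]
        have hq2 : q * (q * x) / q = q * x := mul_div_cancel_left₀ (q * x) hq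
        rw [hq2, h]
        field_simp
      -- second divided difference
      have d2 : Dop q (Dop q (fun y => U1 a q (m + 2) (y / q))) x
          = (1 - q ^ (m + 2)) * (1 - q ^ (m + 1)) / q ^ 2 * U1 a q m (x / q) := by
        simp only [Dop] at d1' ⊢
        rw [d1'] -- rewrite value at q*x
        rw [hqq]
        have hB := lower a q m (x / q)
        rw [hLq] at hB
        simp only [Dop, hqq] at d1
        rw [d1]
        rw [show U1 a q (m + 1) (x / q) = U1 a q (m + 1) x
            + (1 - q ^ (m + 1)) * (x / q) * U1 a q m (x / q) by linarith]
        field_simp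
        ring
      simp only []
      rw [d1, d2, hzpow]
      have key2 : U1 a q (m + 2) x
          = q ^ (m + 2) * U1 a q (m + 2) (x / q)
            - (1 + a) * (1 - q ^ (m + 2)) * q ^ (m + 1) * U1 a q (m + 1) (x / q)
            + a * (1 - q ^ (m + 2)) * (1 - q ^ (m + 1)) * q ^ m * U1 a q m (x / q) := by
        have h := fshift a q m (x / q)
        rw [hLq] at h
        apply mul_left_cancel₀ (pow_ne_zero 2 hq)
        linear_combination h
      rw [key2]
      have hqp : (q : ℝ) ^ (m + 2) ≠ 0 := pow_ne_zero _ hq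
      field_simp
      ring
end ASC
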